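/- Every infinite limit homogeneous set for a stable 2-coloring of pairs contains an infinite homogeneous subset with the same color. -/
import Mathlib


/-- Every infinite limit homogeneous set for a stable 2-coloring of pairs
contains an infinite homogeneous subset with the same color. -/
theorem limit_homogeneous_contains_homogeneous (c : ℕ → ℕ → Fin 2)
    (hstable : ∀ x : ℕ, ∃ j : Fin 2, ∃ N : ℕ, ∀ y, N ≤ y → x < y → c x y = j)
    (L : Set ℕ) (hL : L.Infinite) (j : Fin 2)
    (hlim : ∀ x ∈ L, ∃ N : ℕ, ∀ y, N ≤ y → x < y → c x y = j) :
    ∃ H ⊆ L, H.Infinite ∧ ∀ x ∈ H, ∀ y ∈ H, x < y → c x y = j := by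
  classical
  have hN : ∀ x, ∃ N : ℕ, x ∈ L → ∀ y, N ≤ y → x < y → c x y = j := by
    intro x
    by_cases h : x ∈ L
    · obtain ⟨N, hN⟩ := hlim x h
      exact ⟨N, fun _ => hN⟩
    · exact ⟨0, fun h' => absurd h' h⟩
  choose N hNspec using hN
  have step : ∀ b : ℕ, ∃ x ∈ L, b < x := fun b => hL.exists_gt b
  choose pick hpickL hpickGt using step
  obtain ⟨a0, ha0⟩ := hL.nonempty
  let f : ℕ → ℕ × ℕ := fun n => Nat.rec (a0, N a0)
    (fun _ p => (pick (max p.1 p.2), max p.2 (N (pick (max p.1 p.2))))) n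
  let a : ℕ → ℕ := fun n => (f n).1
  let m : ℕ → ℕ := fun n => (f n).2
  have hfa : ∀ n, a (n+1) = pick (max (a n) (m n)) := fun n => rfl
  have hfm : ∀ n, m (n+1) = max (m n) (N (a (n+1))) := fun n => rfl
  have haL : ∀ n, a n ∈ L := by
    intro n; cases n with
    | zero => exact ha0
    | succ n => rw [hfa]; exact hpickL _
  have hagt : ∀ n, a n < a (n+1) := by
    intro n; rw [hfa]
    exact lt_of_le_of_lt (le_max_left _ _) (hpickGt _)
  have hmono : StrictMono a := strictMono_nat_of_lt_succ hagt
  have hmN : ∀ n, N (a n) ≤ m n := by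
    intro n; cases n with
    | zero => exact le_rfl
    | succ n => rw [hfm]; exact le_max_right _ _
  have hmmono : Monotone m :=
    monotone_nat_of_le_succ (fun n => by rw [hfm]; exact le_max_left _ _)
  have key : ∀ i k, i < k → c (a i) (a k) = j := by
    intro i k hik
    obtain ⟨n, rfl⟩ := Nat.exists_eq_add_of_lt hik
    have h1 : m i < a (i + n + 1) := by
      have h2 : m (i + n) < a (i + n + 1) := by
        rw [hfa]; exact lt_of_le_of_lt (le_max_right _ _) (hpickGt _)
      exact lt_of_le_of_lt (hmmono (Nat.le_add_right i n)) h2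
    exact hNspec (a i) (haL i) _ (le_of_lt (lt_of_le_of_lt (hmN i) h1)) (hmono hik)
  refine ⟨Set.range a, ?_, ?_, ?_⟩
  · rintro _ ⟨n, rfl⟩; exact haL n
  · exact Set.infinite_range_of_injective hmono.injective
  · rintro _ ⟨i, rfl⟩ _ ⟨k, rfl⟩ hxy
    exact key i k (hmono.lt_iff_lt.mp hxy)
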